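/- Let N ≥ 1 and let D₁, D₃ be real N×N matrices that are skew-symmetric (Dᵀ = −D) and satisfy D₁𝟙 = 0 and D₃𝟙 = 0, where 𝟙 is the all-ones vector. If u : ℝ → ℝᴺ is differentiable and satisfies the split-form Korteweg–de Vries semidiscretization ∂_t u + (1/3)(D₁(u ∘ u) + u ∘ (D₁ u)) + D₃ u = 0, where ∘ denotes elementwise (Hadamard) multiplication, then the total mass Σ_{i=1}^{N} u_i(t) is constant in t. -/

import Mathlib

open Matrix


/-- For skew-symmetric derivative matrices `D₁`, `D₃` annihilating the constant vector,
the split-form KdV semidiscretization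
`∂ₜ u + (1/3)(D₁(u∘u) + u∘(D₁u)) + D₃ u = 0` conserves the total mass `∑ᵢ uᵢ(t)`. -/
theorem kdv_split_form_mass_conservation
    (N : ℕ) (hN : 1 ≤ N) (D₁ D₃ : Matrix (Fin N) (Fin N) ℝ)
    (h1skew : D₁.transpose = -D₁) (h3skew : D₃.transpose = -D₃)
    (h1one : D₁.mulVec (fun _ => 1) = 0) (h3one : D₃.mulVec (fun _ => 1) = 0)
    (u : ℝ → Fin N → ℝ)
    (hu : ∀ t : ℝ, HasDerivAt u
      (-((1 / 3 : ℝ) • (D₁.mulVec (u t * u t) + u t * D₁.mulVec (u t)) + D₃.mulVec (u t))) t)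
    (t : ℝ) :
    ∑ i, u t i = ∑ i, u 0 i := by
  -- sum of a matrix-vector product with 𝟙ᵀM = 0
  have sum_mulVec : ∀ (M : Matrix (Fin N) (Fin N) ℝ), M.transpose = -M →
      M.mulVec (fun _ => 1) = 0 → ∀ v : Fin N → ℝ, ∑ i, M.mulVec v i = 0 := by
    intro M hskew hone v
    have h : ∑ i, M.mulVec v i = dotProduct (fun _ => (1:ℝ)) (M.mulVec v) := by
      simp [dotProduct]
    rw [h, dotProduct_mulVec, ← Matrix.mulVec_transpose, hskew, Matrix.neg_mulVec, hone]
    simp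
  have sum_quad : ∀ v : Fin N → ℝ, ∑ i, (v * D₁.mulVec v) i = 0 := by
    intro v
    have h : ∑ i, (v * D₁.mulVec v) i = dotProduct v (D₁.mulVec v) := by
      simp [dotProduct]
    have h2 : dotProduct v (D₁.mulVec v) = -(dotProduct v (D₁.mulVec v)) := by
      conv_lhs => rw [dotProduct_mulVec, ← Matrix.mulVec_transpose, h1skew,
        Matrix.neg_mulVec, neg_dotProduct, dotProduct_comm]
    rw [h]
    linarith
  have key : ∀ s : ℝ, HasDerivAt (fun r => ∑ i, u r i) 0 s := by
    intro s
    have h := hasDerivAt_pi.mp (hu s)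
    have hsum := HasDerivAt.fun_sum (fun i (_ : i ∈ Finset.univ) => h i)
    refine hsum.congr_deriv ?_
    have e1 := sum_mulVec D₁ h1skew h1one (u s * u s)
    have e3 := sum_mulVec D₃ h3skew h3one (u s)
    have e2 := sum_quad (u s)
    simp only [Pi.neg_apply, Pi.add_apply, Pi.smul_apply, smul_eq_mul]
    rw [Finset.sum_neg_distrib, Finset.sum_add_distrib, ← Finset.mul_sum,
      Finset.sum_add_distrib, e1, e2, e3]
    ring
  have : ∀ s : ℝ, (fun r => ∑ i, u r i) s = (fun r => ∑ i, u r i) 0 := by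
    intro s
    exact is_const_of_deriv_eq_zero (𝕜 := ℝ) (f := fun r => ∑ i, u r i)
      (fun x => (key x).differentiableAt) (fun x => (key x).deriv) s 0
  exact this t
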